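/- The function f(ν) = Σ_{i∈Z̄} p_i log(ν − V_i) + log(Σ_{i∈Z̄} p_i/(ν − V_i)) is monotonically decreasing on (max_{i∈Z̄} V_i, ∞), provided V is not constant on the support of p. -/

import Mathlib

open Finset

/-- The function f is strictly decreasing on (max_{i ∈ Z̄} V i, ∞) when V is
not constant on the support of p. -/
theorem f_strictAntiOn (n : ℕ) (p V : Fin n → ℝ)
    (hp0 : ∀ i, 0 ≤ p i) (hp1 : ∑ i, p i = 1)
    (hV : ∃ i j, 0 < p i ∧ 0 < p j ∧ V i ≠ V j) :
    StrictAntiOn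
      (fun ν => (∑ i ∈ univ.filter (fun i => 0 < p i), p i * Real.log (ν - V i))
        + Real.log (∑ i ∈ univ.filter (fun i => 0 < p i), p i / (ν - V i)))
      {ν : ℝ | ∀ i, 0 < p i → V i < ν} := by
  obtain ⟨i₀, j₀, hi₀, hj₀, hVij⟩ := hV
  set Z := univ.filter (fun i : Fin n => 0 < p i) with hZ
  have hi₀Z : i₀ ∈ Z := by simp [hZ, hi₀]
  have hj₀Z : j₀ ∈ Z := by simp [hZ, hj₀]
  have hZne : Z.Nonempty := ⟨i₀, hi₀Z⟩
  set M := Z.sup' hZne V with hM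
  have hset : {ν : ℝ | ∀ i, 0 < p i → V i < ν} = Set.Ioi M := by
    ext ν
    simp only [Set.mem_setOf_eq, Set.mem_Ioi, hM, Finset.sup'_lt_iff, hZ, mem_filter,
      mem_univ, true_and]
  rw [hset]
  have hpZ : ∑ i ∈ Z, p i = 1 := by
    rw [← hp1]
    apply Finset.sum_subset (Finset.subset_univ _)
    intro i _ hiZ
    have : ¬ 0 < p i := by simpa [hZ] using hiZ
    linarith [hp0 i]
  have hderiv : ∀ x ∈ Set.Ioi M,
      HasDerivAt (fun ν => (∑ i ∈ Z, p i * Real.log (ν - V i))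
        + Real.log (∑ i ∈ Z, p i / (ν - V i)))
        ((∑ i ∈ Z, p i / (x - V i))
          + (∑ i ∈ Z, -(p i) / (x - V i) ^ 2) / (∑ i ∈ Z, p i / (x - V i))) x := by
    intro x hx
    have hlt : ∀ i ∈ Z, V i < x := fun i hi => lt_of_le_of_lt (Finset.le_sup' V hi) hx
    have hne : ∀ i ∈ Z, x - V i ≠ 0 := fun i hi => sub_ne_zero.2 (hlt i hi).ne'
    have hSpos : 0 < ∑ i ∈ Z, p i / (x - V i) := by
      apply Finset.sum_pos
      · intro i hi
        exact div_pos (mem_filter.1 hi).2 (sub_pos.2 (hlt i hi))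
      · exact hZne
    have h1 : HasDerivAt (fun ν => ∑ i ∈ Z, p i * Real.log (ν - V i))
        (∑ i ∈ Z, p i / (x - V i)) x := by
      apply HasDerivAt.fun_sum
      intro i hi
      have hd : HasDerivAt (fun ν : ℝ => ν - V i) 1 x := (hasDerivAt_id x).sub_const (V i)
      have := (hd.log (hne i hi)).const_mul (p i)
      simpa [mul_one_div, div_eq_mul_inv] using this
    have h2 : HasDerivAt (fun ν => ∑ i ∈ Z, p i / (ν - V i))
        (∑ i ∈ Z, -(p i) / (x - V i) ^ 2) x := by
      apply HasDerivAt.fun_sum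
      intro i hi
      have hd : HasDerivAt (fun ν : ℝ => ν - V i) 1 x := (hasDerivAt_id x).sub_const (V i)
      have h := (hd.inv (hne i hi)).const_mul (p i)
      simp only [Pi.inv_apply] at h
      have heq : (fun ν : ℝ => p i * (ν - V i)⁻¹) = fun ν : ℝ => p i / (ν - V i) := by
        funext ν; rw [div_eq_mul_inv]
      rw [heq] at h
      rw [show -(p i) / (x - V i) ^ 2 = p i * (-1 / (x - V i) ^ 2) by ring]
      exact h
    exact h1.add (h2.log (ne_of_gt hSpos))
  apply strictAntiOn_of_deriv_neg (convex_Ioi M)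
  · intro x hx
    exact ((hderiv x hx).continuousAt).continuousWithinAt
  · rw [interior_Ioi]
    intro x hx
    rw [(hderiv x hx).deriv]
    have hlt : ∀ i ∈ Z, V i < x := fun i hi => lt_of_le_of_lt (Finset.le_sup' V hi) hx
    have hne : ∀ i ∈ Z, x - V i ≠ 0 := fun i hi => sub_ne_zero.2 (hlt i hi).ne'
    set a : Fin n → ℝ := fun i => (x - V i)⁻¹ with ha
    set S := ∑ i ∈ Z, p i / (x - V i) with hSdef
    set T := ∑ i ∈ Z, p i / (x - V i) ^ 2 with hTdef
    have hSpos : 0 < S := by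
      rw [hSdef]
      apply Finset.sum_pos
      · intro i hi
        exact div_pos (mem_filter.1 hi).2 (sub_pos.2 (hlt i hi))
      · exact hZne
    have hsumneg : ∑ i ∈ Z, -(p i) / (x - V i) ^ 2 = -T := by
      rw [hTdef, ← Finset.sum_neg_distrib]
      exact Finset.sum_congr rfl fun i _ => by rw [neg_div]
    rw [hsumneg]
    -- variance identity
    have hSa : ∑ i ∈ Z, p i * a i = S := by
      rw [hSdef]
      exact Finset.sum_congr rfl fun i _ => by rw [ha, div_eq_mul_inv]
    have hTa : ∑ i ∈ Z, p i * a i ^ 2 = T := by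
      rw [hTdef]
      exact Finset.sum_congr rfl fun i _ => by
        rw [ha]; rw [div_eq_mul_inv, inv_pow]
    have hexpand : ∑ i ∈ Z, p i * (a i - S) ^ 2 = T - S ^ 2 := by
      have e1 : ∀ i ∈ Z, p i * (a i - S) ^ 2
          = p i * a i ^ 2 - 2 * S * (p i * a i) + S ^ 2 * p i := fun i _ => by ring
      rw [Finset.sum_congr rfl e1, Finset.sum_add_distrib, Finset.sum_sub_distrib,
        ← Finset.mul_sum, ← Finset.mul_sum, hSa, hTa, hpZ]
      ring
    have haij : a i₀ ≠ a j₀ := by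
      rw [ha]
      simp only [ne_eq, inv_inj]
      intro h
      exact hVij (by linarith)
    have hvar : 0 < ∑ i ∈ Z, p i * (a i - S) ^ 2 := by
      have hex : ∃ k ∈ Z, a k ≠ S := by
        by_cases h : a i₀ = S
        · exact ⟨j₀, hj₀Z, fun hc => haij (h.trans hc.symm)⟩
        · exact ⟨i₀, hi₀Z, h⟩
      obtain ⟨k, hkZ, hk⟩ := hex
      apply Finset.sum_pos'
      · intro i hi
        exact mul_nonneg (hp0 i) (sq_nonneg _)
      · refine ⟨k, hkZ, mul_pos (mem_filter.1 hkZ).2 ?_⟩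
        have : a k - S ≠ 0 := sub_ne_zero.2 hk
        positivity
    have hST : S ^ 2 < T := by
      rw [hexpand] at hvar; linarith
    have hform : S + -T / S = (S ^ 2 - T) / S := by
      field_simp
      ring
    rw [hform]
    exact div_neg_of_neg_of_pos (by linarith) hSpos
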